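/- arXiv:1104.4446 — 4 statements merged into one kernel-verified Lean document; each statement's English description precedes it below -/
import Mathlib

section
/- Let R be a unital associative algebra over ℚ and let A₁, A₂, B₁, B₂ ∈ R be such that each commutator [A_a, B_b] (a, b = 1, 2) lies in the center of R. Then, with indices taken modulo 2 (so A₃ = A₁, B₃ = B₁), the commutator of anti-commutators satisfies (1/2)[(1/2){A₁,A₂}, (1/2){B₁,B₂}] = Σ_{a,b=1}^{2} (1/2)[A_a, B_b] · (1/2){A_{a+1}, B_{b+1}}; i.e. it is a sum of the four single-commutator terms. -/
private lemma wick_aux {R : Type*} [Ring R] (p q r s : R)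
    (hqr : ∀ x, (q*r - r*q)*x = x*(q*r - r*q))
    (hqs : ∀ x, (q*s - s*q)*x = x*(q*s - s*q))
    (_hpr : ∀ x, (p*r - r*p)*x = x*(p*r - r*p))
    (hps : ∀ x, (p*s - s*p)*x = x*(p*s - s*p)) :
    p*q*(r*s) - r*s*(p*q)
      = (q*s - s*q)*(p*r) + (q*r - r*q)*(p*s)
        + (p*s - s*p)*(r*q) + (p*r - r*p)*(s*q) := by
  have a1 : p*(q*r - r*q)*s = (q*r - r*q)*(p*s) := by
    rw [mul_assoc, ← mul_assoc p, ← hqr p, mul_assoc]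
  have a2 : (p*r)*(q*s - s*q) = (q*s - s*q)*(p*r) := (hqs (p*r)).symm
  have a3 : r*(p*s - s*p)*q = (p*s - s*p)*(r*q) := by
    rw [mul_assoc, ← mul_assoc r, ← hps r, mul_assoc]
  have h1 : p*q*(r*s) = p*r*(s*q) + (q*s - s*q)*(p*r) + (q*r - r*q)*(p*s) := by
    calc p*q*(r*s) = p*r*(q*s) + p*(q*r - r*q)*s := by noncomm_ring
      _ = p*r*(q*s) + (q*r - r*q)*(p*s) := by rw [a1]
      _ = p*r*(s*q) + (p*r)*(q*s - s*q) + (q*r - r*q)*(p*s) := by noncomm_ring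
      _ = p*r*(s*q) + (q*s - s*q)*(p*r) + (q*r - r*q)*(p*s) := by rw [a2]
  have h2 : r*s*(p*q) = p*r*(s*q) - (p*r - r*p)*(s*q) - (p*s - s*p)*(r*q) := by
    calc r*s*(p*q) = r*p*(s*q) - r*(p*s - s*p)*q := by noncomm_ring
      _ = r*p*(s*q) - (p*s - s*p)*(r*q) := by rw [a3]
      _ = p*r*(s*q) - (p*r - r*p)*(s*q) - (p*s - s*p)*(r*q) := by noncomm_ring
  rw [h1, h2]; noncomm_ring

/-- Wick's theorem for commutators and symmetrization, part (i):
if all commutators `[A a, B b]` are central ("c-numbers"), then the commutator of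
anti-commutators is a sum of four single-commutator terms (indices mod 2 via `Fin 2`). -/
theorem wick_commutator_anticommutator {R : Type*} [Ring R] [Algebra ℚ R]
    (A B : Fin 2 → R)
    (hc : ∀ a b : Fin 2, A a * B b - B b * A a ∈ Set.center R) :
    (1/2 : ℚ) •
      (((1/2 : ℚ) • (A 0 * A 1 + A 1 * A 0)) * ((1/2 : ℚ) • (B 0 * B 1 + B 1 * B 0)) -
       ((1/2 : ℚ) • (B 0 * B 1 + B 1 * B 0)) * ((1/2 : ℚ) • (A 0 * A 1 + A 1 * A 0))) =
    ∑ a : Fin 2, ∑ b : Fin 2,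
      ((1/2 : ℚ) • (A a * B b - B b * A a)) *
        ((1/2 : ℚ) • (A (a + 1) * B (b + 1) + B (b + 1) * A (a + 1))) := by
  have hcomm : ∀ a b : Fin 2, ∀ x : R,
      (A a * B b - B b * A a) * x = x * (A a * B b - B b * A a) :=
    fun a b x => (hc a b).comm x
  have e : ∀ x y : R, ((1/2:ℚ) • x) * ((1/2:ℚ) • y) = (1/4:ℚ) • (x*y) := by
    intro x y
    rw [smul_mul_smul_comm]
    norm_num
  simp only [Fin.sum_univ_two, show (0+1 : Fin 2) = 1 from rfl,
    show (1+1 : Fin 2) = 0 from rfl]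
  set SA := A 0 * A 1 + A 1 * A 0 with hSA
  set SB := B 0 * B 1 + B 1 * B 0 with hSB
  set Y := (A 0 * B 0 - B 0 * A 0) * (A 1 * B 1 + B 1 * A 1)
    + (A 0 * B 1 - B 1 * A 0) * (A 1 * B 0 + B 0 * A 1)
    + (A 1 * B 0 - B 0 * A 1) * (A 0 * B 1 + B 1 * A 0)
    + (A 1 * B 1 - B 1 * A 1) * (A 0 * B 0 + B 0 * A 0) with hY
  have key : SA * SB - SB * SA = Y + Y := by
    have e1 := wick_aux (A 0) (A 1) (B 0) (B 1)
      (hcomm 1 0) (hcomm 1 1) (hcomm 0 0) (hcomm 0 1)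
    have e2 := wick_aux (A 0) (A 1) (B 1) (B 0)
      (hcomm 1 1) (hcomm 1 0) (hcomm 0 1) (hcomm 0 0)
    have e3 := wick_aux (A 1) (A 0) (B 0) (B 1)
      (hcomm 0 0) (hcomm 0 1) (hcomm 1 0) (hcomm 1 1)
    have e4 := wick_aux (A 1) (A 0) (B 1) (B 0)
      (hcomm 0 1) (hcomm 0 0) (hcomm 1 1) (hcomm 1 0)
    calc SA * SB - SB * SA
        = (A 0*A 1*(B 0*B 1) - B 0*B 1*(A 0*A 1))
          + (A 0*A 1*(B 1*B 0) - B 1*B 0*(A 0*A 1))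
          + (A 1*A 0*(B 0*B 1) - B 0*B 1*(A 1*A 0))
          + (A 1*A 0*(B 1*B 0) - B 1*B 0*(A 1*A 0)) := by
            rw [hSA, hSB]; noncomm_ring
      _ = Y + Y := by rw [e1, e2, e3, e4, hY]; noncomm_ring
  calc (1/2 : ℚ) • (((1/2:ℚ) • SA) * ((1/2:ℚ) • SB) - ((1/2:ℚ) • SB) * ((1/2:ℚ) • SA))
      = (1/2 : ℚ) • ((1/4:ℚ) • (SA * SB - SB * SA)) := by rw [e, e, ← smul_sub]
    _ = (1/2 : ℚ) • ((1/4:ℚ) • (Y + Y)) := by rw [key]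
    _ = _ := by simp only [e, hY]; module
end

section
/- Let A be a unital associative algebra over ℝ, let d ∈ ℕ, let ħ, κ ∈ ℝ, and let α : Fin d → ℤ → A satisfy [α^i_m, α^j_n] = ħ·m·κ^{|m|}·δ_{m+n,0}·δ^{ij}·1 for all i, j ∈ Fin d and m, n ∈ ℤ. For indices i₁, i₂, i₃, i₄ ∈ Fin d and mode numbers n₁, n₂, n₃, n₄ ∈ ℤ, define the normal-ordered quartic product :α^{i₁}_{n₁} α^{i₂}_{n₂} α^{i₃}_{n₃} α^{i₄}_{n₄}: as the product of the four factors taken in any order in which every factor with strictly negative mode number stands to the left of every factor with nonnegative mode number (this is well defined since any two factors whose mode numbers do not sum to zero commute). Then the 4-symmetrizer satisfies (1/24){α^{i₁}_{n₁}, α^{i₂}_{n₂}, α^{i₃}_{n₃}, α^{i₄}_{n₄}} = :α^{i₁}_{n₁} α^{i₂}_{n₂} α^{i₃}_{n₃} α^{i₄}_{n₄}: + (6/24)·Σ_{π∈S₄} c^{i_{π(1)} i_{π(2)}}_{n_{π(1)} n_{π(2)}} · :α^{i_{π(3)}}_{n_{π(3)}} α^{i_{π(4)}}_{n_{π(4)}}: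 + (3/24)·Σ_{π∈S₄} c^{i_{π(1)} i_{π(2)}}_{n_{π(1)} n_{π(2)}} · c^{i_{π(3)} i_{π(4)}}_{n_{π(3)} n_{π(4)}} · 1, where c^{ij}_{mn} := (ħ/2)·|m|·κ^{|m|}·δ_{m+n,0}·δ^{ij}. -/
/-- The Heaviside step function on integers, with `θ 0 = 1/2`. -/
noncomputable def heaviside (x : ℤ) : ℝ :=
  if 0 < x then 1 else if x = 0 then 1/2 else 0

/-- The single contraction `c^{ij}_{mn} = (ħ/2)·|m|·κ^{|m|}·δ_{m+n,0}·δ^{ij}`. -/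
noncomputable def contraction {d : ℕ} (hbar κ : ℝ) (i j : Fin d) (m n : ℤ) : ℝ :=
  (hbar / 2) * (m.natAbs : ℝ) * κ ^ m.natAbs *
    (if m + n = 0 then 1 else 0) * (if i = j then 1 else 0)

/-- The normal-ordered pair `:α^i_m α^j_n: = θ(n−m)·α^i_m α^j_n + θ(m−n)·α^j_n α^i_m`. -/
noncomputable def normalPair {A : Type*} [Ring A] [Algebra ℝ A] {d : ℕ}
    (α : Fin d → ℤ → A) (i j : Fin d) (m n : ℤ) : A :=
  heaviside (n - m) • (α i m * α j n) + heaviside (m - n) • (α j n * α i m)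

/-- The normal-ordered quartic product of four oscillator modes with indices
`I : Fin 4 → Fin d` and mode numbers `N : Fin 4 → ℤ`: all factors with strictly
negative mode number stand to the left of all factors with nonnegative mode number
(within each group the original order is kept; any order within the groups gives
the same element, since factors whose mode numbers do not sum to zero commute). -/
noncomputable def normalQuartic {A : Type*} [Ring A] [Algebra ℝ A] {d : ℕ}
    (α : Fin d → ℤ → A) (I : Fin 4 → Fin d) (N : Fin 4 → ℤ) : A :=
  (((List.finRange 4).filter fun k => decide (N k < 0)).map fun k => α (I k) (N k)).prod *
  (((List.finRange 4).filter fun k => decide (0 ≤ N k)).map fun k => α (I k) (N k)).prod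

def mkp (v w : Fin 4 → Fin 4) (h1 : ∀ x, w (v x) = x) (h2 : ∀ x, v (w x) = x) :
    Equiv.Perm (Fin 4) := ⟨v, w, h1, h2⟩

def L : Fin 24 → Equiv.Perm (Fin 4) :=
![mkp ![0,1,2,3] ![0,1,2,3] (by decide) (by decide),
  mkp ![0,1,3,2] ![0,1,3,2] (by decide) (by decide),
  mkp ![0,2,1,3] ![0,2,1,3] (by decide) (by decide),
  mkp ![0,2,3,1] ![0,3,1,2] (by decide) (by decide),
  mkp ![0,3,1,2] ![0,2,3,1] (by decide) (by decide),
  mkp ![0,3,2,1] ![0,3,2,1] (by decide) (by decide),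
  mkp ![1,0,2,3] ![1,0,2,3] (by decide) (by decide),
  mkp ![1,0,3,2] ![1,0,3,2] (by decide) (by decide),
  mkp ![1,2,0,3] ![2,0,1,3] (by decide) (by decide),
  mkp ![1,2,3,0] ![3,0,1,2] (by decide) (by decide),
  mkp ![1,3,0,2] ![2,0,3,1] (by decide) (by decide),
  mkp ![1,3,2,0] ![3,0,2,1] (by decide) (by decide),
  mkp ![2,0,1,3] ![1,2,0,3] (by decide) (by decide),
  mkp ![2,0,3,1] ![1,3,0,2] (by decide) (by decide),
  mkp ![2,1,0,3] ![2,1,0,3] (by decide) (by decide),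
  mkp ![2,1,3,0] ![3,1,0,2] (by decide) (by decide),
  mkp ![2,3,0,1] ![2,3,0,1] (by decide) (by decide),
  mkp ![2,3,1,0] ![3,2,0,1] (by decide) (by decide),
  mkp ![3,0,1,2] ![1,2,3,0] (by decide) (by decide),
  mkp ![3,0,2,1] ![1,3,2,0] (by decide) (by decide),
  mkp ![3,1,0,2] ![2,1,3,0] (by decide) (by decide),
  mkp ![3,1,2,0] ![3,1,2,0] (by decide) (by decide),
  mkp ![3,2,0,1] ![2,3,1,0] (by decide) (by decide),
  mkp ![3,2,1,0] ![3,2,1,0] (by decide) (by decide)]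

lemma L_bij : Function.Bijective L := by decide

noncomputable def e24 : Fin 24 ≃ Equiv.Perm (Fin 4) := Equiv.ofBijective L L_bij

lemma sum_perm4 {M : Type*} [AddCommMonoid M] (F : Fin 4 → Fin 4 → Fin 4 → Fin 4 → M) :
    ∑ π : Equiv.Perm (Fin 4), F (π 0) (π 1) (π 2) (π 3) =
      F 0 1 2 3 + F 0 1 3 2 + F 0 2 1 3 + F 0 2 3 1 + F 0 3 1 2 + F 0 3 2 1 +
      F 1 0 2 3 + F 1 0 3 2 + F 1 2 0 3 + F 1 2 3 0 + F 1 3 0 2 + F 1 3 2 0 +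
      F 2 0 1 3 + F 2 0 3 1 + F 2 1 0 3 + F 2 1 3 0 + F 2 3 0 1 + F 2 3 1 0 +
      F 3 0 1 2 + F 3 0 2 1 + F 3 1 0 2 + F 3 1 2 0 + F 3 2 0 1 + F 3 2 1 0 := by
  rw [← Equiv.sum_comp e24 (fun π => F (π 0) (π 1) (π 2) (π 3))]
  simp only [e24, Equiv.ofBijective_apply, Fin.sum_univ_succ, Finset.univ_unique,
    Finset.sum_singleton]
  norm_num [L, mkp, Matrix.cons_val_zero, Matrix.cons_val_one, Matrix.head_cons,
    Matrix.cons_val_succ]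
  abel

section swaplemmas
variable {A : Type*} [Ring A] [Algebra ℝ A]
lemma swap12 {x y z u : A} {r : ℝ} (h : x * y = y * x + r • (1:A)) :
    x*(y*(z*u)) = y*(x*(z*u)) + r • (z*u) := by
  rw [← mul_assoc, h, add_mul, smul_mul_assoc, one_mul, mul_assoc]
lemma swap23 {x y z u : A} {r : ℝ} (h : y * z = z * y + r • (1:A)) :
    x*(y*(z*u)) = x*(z*(y*u)) + r • (x*u) := by
  rw [← mul_assoc y, h, add_mul, smul_mul_assoc, one_mul, mul_assoc, mul_add, mul_smul_comm]
lemma swap34 {x y z u : A} {r : ℝ} (h : z * u = u * z + r • (1:A)) :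
    x*(y*(z*u)) = x*(y*(u*z)) + r • (x*y) := by
  rw [h, mul_add, mul_add, mul_smul_comm, mul_smul_comm, mul_one, ← mul_assoc]
end swaplemmas

lemma core {A : Type*} [Ring A] [Algebra ℝ A] (a : Fin 4 → A)
    (C co : Fin 4 → Fin 4 → ℝ) (np : Fin 4 → Fin 4 → A)
    (hC : ∀ k l : Fin 4, k < l → a l * a k = a k * a l + (-(C k l)) • (1:A))
    (hco : ∀ k l : Fin 4, co k l = -(1/2) * (if k ≤ l then C k l else C l k))
    (hnp : ∀ k l : Fin 4, np k l = if k ≤ l then a k * a l else a l * a k) :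
    (1/24 : ℝ) • (∑ π : Equiv.Perm (Fin 4), (List.ofFn fun k => a (π k)).prod) =
      a 0 * (a 1 * (a 2 * a 3))
      + (6/24 : ℝ) • (∑ π : Equiv.Perm (Fin 4), co (π 0) (π 1) • np (π 2) (π 3))
      + (3/24 : ℝ) • (∑ π : Equiv.Perm (Fin 4),
          (co (π 0) (π 1) * co (π 2) (π 3)) • (1:A)) := by
  have hw : ∀ π : Equiv.Perm (Fin 4), (List.ofFn fun k => a (π k)).prod
      = a (π 0) * (a (π 1) * (a (π 2) * a (π 3))) := by
    intro π; simp [List.ofFn_succ, show Fin.succ 2 = (3:Fin 4) from rfl]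
  simp only [hw]
  rw [sum_perm4 (fun i j k l => a i * (a j * (a k * a l))),
      sum_perm4 (fun i j k l => co i j • np k l),
      sum_perm4 (fun i j k l => (co i j * co k l) • (1:A))]
  simp only [hco, hnp, show (((0:Fin 4)) ≤ 0) by decide, show (((0:Fin 4)) ≤ 1) by decide, show (((0:Fin 4)) ≤ 2) by decide, show (((0:Fin 4)) ≤ 3) by decide, show ¬(((1:Fin 4)) ≤ 0) by decide, show (((1:Fin 4)) ≤ 1) by decide, show (((1:Fin 4)) ≤ 2) by decide, show (((1:Fin 4)) ≤ 3) by decide, show ¬(((2:Fin 4)) ≤ 0) by decide, show ¬(((2:Fin 4)) ≤ 1) by decide, show (((2:Fin 4)) ≤ 2) by decide, show (((2:Fin 4)) ≤ 3) by decide, show ¬(((3:Fin 4)) ≤ 0) by decide, show ¬(((3:Fin 4)) ≤ 1) by decide, show ¬(((3:Fin 4)) ≤ 2) by decide, show (((3:Fin 4)) ≤ 3) by decide, if_true, if_false, if_pos, if_neg]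
  rw [swap34 (x := a 0) (y := a 1) (z := a 3) (u := a 2) (hC 2 3 (by decide)),
    swap23 (x := a 0) (y := a 2) (z := a 1) (u := a 3) (hC 1 2 (by decide)),
    swap34 (x := a 0) (y := a 2) (z := a 3) (u := a 1) (hC 1 3 (by decide)),
    swap23 (x := a 0) (y := a 2) (z := a 1) (u := a 3) (hC 1 2 (by decide)),
    swap23 (x := a 0) (y := a 3) (z := a 1) (u := a 2) (hC 1 3 (by decide)),
    swap34 (x := a 0) (y := a 1) (z := a 3) (u := a 2) (hC 2 3 (by decide)),
    swap23 (x := a 0) (y := a 3) (z := a 2) (u := a 1) (hC 2 3 (by decide)),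
    swap34 (x := a 0) (y := a 2) (z := a 3) (u := a 1) (hC 1 3 (by decide)),
    swap23 (x := a 0) (y := a 2) (z := a 1) (u := a 3) (hC 1 2 (by decide)),
    swap12 (x := a 1) (y := a 0) (z := a 2) (u := a 3) (hC 0 1 (by decide)),
    swap12 (x := a 1) (y := a 0) (z := a 3) (u := a 2) (hC 0 1 (by decide)),
    swap34 (x := a 0) (y := a 1) (z := a 3) (u := a 2) (hC 2 3 (by decide)),
    swap23 (x := a 1) (y := a 2) (z := a 0) (u := a 3) (hC 0 2 (by decide)),
    swap12 (x := a 1) (y := a 0) (z := a 2) (u := a 3) (hC 0 1 (by decide)),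
    swap34 (x := a 1) (y := a 2) (z := a 3) (u := a 0) (hC 0 3 (by decide)),
    swap23 (x := a 1) (y := a 2) (z := a 0) (u := a 3) (hC 0 2 (by decide)),
    swap12 (x := a 1) (y := a 0) (z := a 2) (u := a 3) (hC 0 1 (by decide)),
    swap23 (x := a 1) (y := a 3) (z := a 0) (u := a 2) (hC 0 3 (by decide)),
    swap12 (x := a 1) (y := a 0) (z := a 3) (u := a 2) (hC 0 1 (by decide)),
    swap34 (x := a 0) (y := a 1) (z := a 3) (u := a 2) (hC 2 3 (by decide)),
    swap23 (x := a 1) (y := a 3) (z := a 2) (u := a 0) (hC 2 3 (by decide)),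
    swap34 (x := a 1) (y := a 2) (z := a 3) (u := a 0) (hC 0 3 (by decide)),
    swap23 (x := a 1) (y := a 2) (z := a 0) (u := a 3) (hC 0 2 (by decide)),
    swap12 (x := a 1) (y := a 0) (z := a 2) (u := a 3) (hC 0 1 (by decide)),
    swap12 (x := a 2) (y := a 0) (z := a 1) (u := a 3) (hC 0 2 (by decide)),
    swap23 (x := a 0) (y := a 2) (z := a 1) (u := a 3) (hC 1 2 (by decide)),
    swap12 (x := a 2) (y := a 0) (z := a 3) (u := a 1) (hC 0 2 (by decide)),
    swap34 (x := a 0) (y := a 2) (z := a 3) (u := a 1) (hC 1 3 (by decide)),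
    swap23 (x := a 0) (y := a 2) (z := a 1) (u := a 3) (hC 1 2 (by decide)),
    swap12 (x := a 2) (y := a 1) (z := a 0) (u := a 3) (hC 1 2 (by decide)),
    swap23 (x := a 1) (y := a 2) (z := a 0) (u := a 3) (hC 0 2 (by decide)),
    swap12 (x := a 1) (y := a 0) (z := a 2) (u := a 3) (hC 0 1 (by decide)),
    swap12 (x := a 2) (y := a 1) (z := a 3) (u := a 0) (hC 1 2 (by decide)),
    swap34 (x := a 1) (y := a 2) (z := a 3) (u := a 0) (hC 0 3 (by decide)),
    swap23 (x := a 1) (y := a 2) (z := a 0) (u := a 3) (hC 0 2 (by decide)),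
    swap12 (x := a 1) (y := a 0) (z := a 2) (u := a 3) (hC 0 1 (by decide)),
    swap23 (x := a 2) (y := a 3) (z := a 0) (u := a 1) (hC 0 3 (by decide)),
    swap12 (x := a 2) (y := a 0) (z := a 3) (u := a 1) (hC 0 2 (by decide)),
    swap34 (x := a 0) (y := a 2) (z := a 3) (u := a 1) (hC 1 3 (by decide)),
    swap23 (x := a 0) (y := a 2) (z := a 1) (u := a 3) (hC 1 2 (by decide)),
    swap23 (x := a 2) (y := a 3) (z := a 1) (u := a 0) (hC 1 3 (by decide)),
    swap12 (x := a 2) (y := a 1) (z := a 3) (u := a 0) (hC 1 2 (by decide)),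
    swap34 (x := a 1) (y := a 2) (z := a 3) (u := a 0) (hC 0 3 (by decide)),
    swap23 (x := a 1) (y := a 2) (z := a 0) (u := a 3) (hC 0 2 (by decide)),
    swap12 (x := a 1) (y := a 0) (z := a 2) (u := a 3) (hC 0 1 (by decide)),
    swap12 (x := a 3) (y := a 0) (z := a 1) (u := a 2) (hC 0 3 (by decide)),
    swap23 (x := a 0) (y := a 3) (z := a 1) (u := a 2) (hC 1 3 (by decide)),
    swap34 (x := a 0) (y := a 1) (z := a 3) (u := a 2) (hC 2 3 (by decide)),
    swap12 (x := a 3) (y := a 0) (z := a 2) (u := a 1) (hC 0 3 (by decide)),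
    swap23 (x := a 0) (y := a 3) (z := a 2) (u := a 1) (hC 2 3 (by decide)),
    swap34 (x := a 0) (y := a 2) (z := a 3) (u := a 1) (hC 1 3 (by decide)),
    swap23 (x := a 0) (y := a 2) (z := a 1) (u := a 3) (hC 1 2 (by decide)),
    swap12 (x := a 3) (y := a 1) (z := a 0) (u := a 2) (hC 1 3 (by decide)),
    swap23 (x := a 1) (y := a 3) (z := a 0) (u := a 2) (hC 0 3 (by decide)),
    swap12 (x := a 1) (y := a 0) (z := a 3) (u := a 2) (hC 0 1 (by decide)),
    swap34 (x := a 0) (y := a 1) (z := a 3) (u := a 2) (hC 2 3 (by decide)),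
    swap12 (x := a 3) (y := a 1) (z := a 2) (u := a 0) (hC 1 3 (by decide)),
    swap23 (x := a 1) (y := a 3) (z := a 2) (u := a 0) (hC 2 3 (by decide)),
    swap34 (x := a 1) (y := a 2) (z := a 3) (u := a 0) (hC 0 3 (by decide)),
    swap23 (x := a 1) (y := a 2) (z := a 0) (u := a 3) (hC 0 2 (by decide)),
    swap12 (x := a 1) (y := a 0) (z := a 2) (u := a 3) (hC 0 1 (by decide)),
    swap12 (x := a 3) (y := a 2) (z := a 0) (u := a 1) (hC 2 3 (by decide)),
    swap23 (x := a 2) (y := a 3) (z := a 0) (u := a 1) (hC 0 3 (by decide)),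
    swap12 (x := a 2) (y := a 0) (z := a 3) (u := a 1) (hC 0 2 (by decide)),
    swap34 (x := a 0) (y := a 2) (z := a 3) (u := a 1) (hC 1 3 (by decide)),
    swap23 (x := a 0) (y := a 2) (z := a 1) (u := a 3) (hC 1 2 (by decide)),
    swap12 (x := a 3) (y := a 2) (z := a 1) (u := a 0) (hC 2 3 (by decide)),
    swap23 (x := a 2) (y := a 3) (z := a 1) (u := a 0) (hC 1 3 (by decide)),
    swap12 (x := a 2) (y := a 1) (z := a 3) (u := a 0) (hC 1 2 (by decide)),
    swap34 (x := a 1) (y := a 2) (z := a 3) (u := a 0) (hC 0 3 (by decide)),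
    swap23 (x := a 1) (y := a 2) (z := a 0) (u := a 3) (hC 0 2 (by decide)),
    swap12 (x := a 1) (y := a 0) (z := a 2) (u := a 3) (hC 0 1 (by decide)),
    hC 0 1 (by decide),
    hC 0 2 (by decide),
    hC 1 2 (by decide),
    hC 0 3 (by decide),
    hC 1 3 (by decide),
    hC 2 3 (by decide)]
  module
/-- commutator scalar -/
noncomputable def Ksc {d : ℕ} (hbar κ : ℝ) (J : Fin 4 → Fin d) (M : Fin 4 → ℤ)
    (k l : Fin 4) : ℝ :=
  hbar * (M k : ℝ) * κ ^ (M k).natAbs *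
    (if M k + M l = 0 then 1 else 0) * (if J k = J l then 1 else 0)

section scalars
variable {d : ℕ} (hbar κ : ℝ) (J : Fin 4 → Fin d) (M : Fin 4 → ℤ)

lemma Ksc_anti (k l : Fin 4) : Ksc hbar κ J M l k = -(Ksc hbar κ J M k l) := by
  unfold Ksc
  by_cases hδ : M k + M l = 0
  · have h1 : M l = -(M k) := by omega
    have h2 : (M l).natAbs = (M k).natAbs := by omega
    have h3 : ((M l) : ℝ) = -((M k) : ℝ) := by rw [h1]; push_cast; ring
    rw [if_pos hδ, if_pos (by omega : M l + M k = 0), h2, h3]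
    by_cases hij : J k = J l
    · rw [if_pos hij, if_pos hij.symm]; ring
    · rw [if_neg hij, if_neg (fun h => hij h.symm)]; ring
  · rw [if_neg hδ, if_neg (by omega : ¬(M l + M k = 0))]; ring

lemma natAbs_cast_nonpos {m : ℤ} (h : m ≤ 0) : ((m.natAbs : ℝ)) = -((m : ℝ)) := by
  have h2 : ((m.natAbs : ℤ)) = -m := by omega
  calc ((m.natAbs : ℝ)) = (((m.natAbs : ℤ) : ℝ)) := by rw [Int.cast_natCast]
    _ = ((-m : ℤ) : ℝ) := by rw [h2]
    _ = -((m : ℝ)) := by push_cast; ring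

lemma natAbs_cast_nonneg {m : ℤ} (h : 0 ≤ m) : ((m.natAbs : ℝ)) = ((m : ℝ)) := by
  have h2 : ((m.natAbs : ℤ)) = m := by omega
  calc ((m.natAbs : ℝ)) = (((m.natAbs : ℤ) : ℝ)) := by rw [Int.cast_natCast]
    _ = ((m : ℤ) : ℝ) := by rw [h2]

lemma contraction_eq_of_monotone {d : ℕ} (hbar κ : ℝ) (J : Fin 4 → Fin d) (M : Fin 4 → ℤ)
    (hM : Monotone M) (k l : Fin 4) :
    contraction hbar κ (J k) (J l) (M k) (M l) =
      -(1/2) * (if k ≤ l then Ksc hbar κ J M k l else Ksc hbar κ J M l k) := by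
  unfold contraction Ksc
  by_cases hkl : k ≤ l
  · rw [if_pos hkl]
    by_cases hδ : M k + M l = 0
    · have h1 : M k ≤ M l := hM hkl
      have h3 := natAbs_cast_nonpos (show M k ≤ 0 by omega)
      rw [if_pos hδ, h3]
      by_cases hij : J k = J l
      · rw [if_pos hij]; ring
      · rw [if_neg hij]; ring
    · rw [if_neg hδ]; ring
  · rw [if_neg hkl]
    have hlk : l ≤ k := le_of_not_ge hkl
    by_cases hδ : M k + M l = 0
    · have h1 : M l ≤ M k := hM hlk
      have h2 : (M l).natAbs = (M k).natAbs := by omega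
      have h3 := natAbs_cast_nonneg (show 0 ≤ M k by omega)
      have h4 : ((M l) : ℝ) = -((M k) : ℝ) := by
        have h5 : M l = -(M k) := by omega
        rw [h5]; push_cast; ring
      rw [if_pos hδ, if_pos (by omega : M l + M k = 0), h2, h3, h4]
      by_cases hij : J k = J l
      · rw [if_pos hij, if_pos hij.symm]; ring
      · rw [if_neg hij, if_neg (fun h => hij h.symm)]; ring
    · rw [if_neg hδ, if_neg (by omega : ¬(M l + M k = 0))]; ring
end scalars

section alg
variable {A : Type*} [Ring A] [Algebra ℝ A] {d : ℕ} (hbar κ : ℝ) (α : Fin d → ℤ → A)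
variable (hcomm : ∀ (i j : Fin d) (m n : ℤ),
      α i m * α j n - α j n * α i m =
        (hbar * (m : ℝ) * κ ^ m.natAbs *
          (if m + n = 0 then (1 : ℝ) else 0) * (if i = j then (1 : ℝ) else 0)) • (1 : A))

include hcomm

lemma commute_of_signs {i j : Fin d} {m n : ℤ}
    (h : (m < 0 ∧ n < 0) ∨ (0 ≤ m ∧ 0 ≤ n)) : Commute (α i m) (α j n) := by
  have hz : (hbar * (m : ℝ) * κ ^ m.natAbs *
      (if m + n = 0 then (1 : ℝ) else 0) * (if i = j then (1 : ℝ) else 0)) = 0 := by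
    by_cases hδ : m + n = 0
    · have hm : m = 0 := by omega
      rw [hm]; norm_num
    · rw [if_neg hδ]; ring
  have h2 := hcomm i j m n
  rw [hz, zero_smul] at h2
  exact sub_eq_zero.mp h2

lemma hC_of {J : Fin 4 → Fin d} {M : Fin 4 → ℤ} (k l : Fin 4) :
    α (J l) (M l) * α (J k) (M k) =
      α (J k) (M k) * α (J l) (M l) + (-(Ksc hbar κ J M k l)) • (1:A) := by
  have h : α (J l) (M l) * α (J k) (M k) - α (J k) (M k) * α (J l) (M l) =
      Ksc hbar κ J M l k • (1:A) := hcomm (J l) (J k) (M l) (M k)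
  rw [Ksc_anti] at h
  exact sub_eq_iff_eq_add'.mp h

lemma commute_of_eq {J : Fin 4 → Fin d} {M : Fin 4 → ℤ} (x y : Fin 4) (hxy : M x = M y) :
    α (J x) (M x) * α (J y) (M y) = α (J y) (M y) * α (J x) (M x) := by
  have h := hcomm (J x) (J y) (M x) (M y)
  have hz : (hbar * ((M x) : ℝ) * κ ^ (M x).natAbs *
      (if M x + M y = 0 then (1 : ℝ) else 0) * (if J x = J y then (1 : ℝ) else 0)) = 0 := by
    by_cases hδ : M x + M y = 0
    · have hm : M x = 0 := by omega
      rw [hm]; norm_num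
    · rw [if_neg hδ]; ring
  rw [hz, zero_smul] at h
  exact sub_eq_zero.mp h

lemma normalPair_eq_of_monotone {J : Fin 4 → Fin d} {M : Fin 4 → ℤ} (hM : Monotone M)
    (k l : Fin 4) :
    normalPair α (J k) (J l) (M k) (M l) =
      if k ≤ l then α (J k) (M k) * α (J l) (M l)
      else α (J l) (M l) * α (J k) (M k) := by
  unfold normalPair heaviside
  by_cases hkl : k ≤ l
  · rw [if_pos hkl]
    rcases lt_or_eq_of_le (hM hkl) with h | h
    · rw [if_pos (by omega : (0:ℤ) < M l - M k), if_neg (by omega : ¬((0:ℤ) < M k - M l)),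
        if_neg (by omega : ¬(M k - M l = 0)), one_smul, zero_smul, add_zero]
    · rw [if_neg (by omega : ¬((0:ℤ) < M l - M k)), if_pos (by omega : M l - M k = 0),
        if_neg (by omega : ¬((0:ℤ) < M k - M l)), if_pos (by omega : M k - M l = 0),
        commute_of_eq hbar κ α hcomm l k (by omega)]
      module
  · rw [if_neg hkl]
    have hlk : l ≤ k := le_of_not_ge hkl
    rcases lt_or_eq_of_le (hM hlk) with h | h
    · rw [if_neg (by omega : ¬((0:ℤ) < M l - M k)), if_neg (by omega : ¬(M l - M k = 0)),
        if_pos (by omega : (0:ℤ) < M k - M l), zero_smul, one_smul, zero_add]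
    · rw [if_neg (by omega : ¬((0:ℤ) < M l - M k)), if_pos (by omega : M l - M k = 0),
        if_neg (by omega : ¬((0:ℤ) < M k - M l)), if_pos (by omega : M k - M l = 0),
        commute_of_eq hbar κ α hcomm k l (by omega)]
      module

omit hcomm in
set_option maxHeartbeats 1000000 in
lemma normalQuartic_sorted {J : Fin 4 → Fin d} {M : Fin 4 → ℤ} (hM : Monotone M) :
    normalQuartic α J M =
      α (J 0) (M 0) * (α (J 1) (M 1) * (α (J 2) (M 2) * α (J 3) (M 3))) := by
  have h01 : M 0 ≤ M 1 := hM (by decide : (0 : Fin 4) ≤ 1)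
  have h12 : M 1 ≤ M 2 := hM (by decide : (1 : Fin 4) ≤ 2)
  have h23 : M 2 ≤ M 3 := hM (by decide : (2 : Fin 4) ≤ 3)
  unfold normalQuartic
  rw [show (List.finRange 4) = [0,1,2,3] from rfl]
  simp only [List.filter_cons, List.filter_nil, decide_eq_true_eq, ← not_lt]
  split_ifs <;> first
    | omega
    | simp [mul_assoc]

end alg

section perminv
variable {A : Type*} [Ring A] [Algebra ℝ A] {d : ℕ} (hbar κ : ℝ) (α : Fin d → ℤ → A)
variable (hcomm : ∀ (i j : Fin d) (m n : ℤ),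
      α i m * α j n - α j n * α i m =
        (hbar * (m : ℝ) * κ ^ m.natAbs *
          (if m + n = 0 then (1 : ℝ) else 0) * (if i = j then (1 : ℝ) else 0)) • (1 : A))

include hcomm

lemma normalQuartic_perm (I : Fin 4 → Fin d) (N : Fin 4 → ℤ) (σ : Equiv.Perm (Fin 4)) :
    normalQuartic α (I ∘ σ) (N ∘ σ) = normalQuartic α I N := by
  have hperm : ((List.finRange 4).map σ).Perm (List.finRange 4) := by
    apply List.perm_of_nodup_nodup_toFinset_eq
      ((List.nodup_finRange 4).map σ.injective) (List.nodup_finRange 4)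
    ext x
    simp only [List.mem_toFinset, List.mem_map, List.mem_finRange, true_and, iff_true]
    exact ⟨σ.symm x, by simp⟩
  unfold normalQuartic
  congr 1
  · have key : ((List.finRange 4).filter fun k => decide ((N ∘ σ) k < 0)).map
        (fun k => α ((I ∘ σ) k) ((N ∘ σ) k))
        = (((List.finRange 4).map σ).filter fun k => decide (N k < 0)).map
            (fun k => α (I k) (N k)) := by
      rw [List.filter_map, List.map_map]
      rfl
    rw [key]
    refine List.Perm.prod_eq' ((hperm.filter _).map _) ?_
    apply List.pairwise_of_forall_mem_list
    intro x hx y hy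
    simp only [List.mem_map, List.mem_filter, decide_eq_true_eq] at hx hy
    obtain ⟨kx, ⟨-, hkx⟩, rfl⟩ := hx
    obtain ⟨ky, ⟨-, hky⟩, rfl⟩ := hy
    exact commute_of_signs hbar κ α hcomm (Or.inl ⟨hkx, hky⟩)
  · have key : ((List.finRange 4).filter fun k => decide (0 ≤ (N ∘ σ) k)).map
        (fun k => α ((I ∘ σ) k) ((N ∘ σ) k))
        = (((List.finRange 4).map σ).filter fun k => decide (0 ≤ N k)).map
            (fun k => α (I k) (N k)) := by
      rw [List.filter_map, List.map_map]
      rfl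
    rw [key]
    refine List.Perm.prod_eq' ((hperm.filter _).map _) ?_
    apply List.pairwise_of_forall_mem_list
    intro x hx y hy
    simp only [List.mem_map, List.mem_filter, decide_eq_true_eq] at hx hy
    obtain ⟨kx, ⟨-, hkx⟩, rfl⟩ := hx
    obtain ⟨ky, ⟨-, hky⟩, rfl⟩ := hy
    exact commute_of_signs hbar κ α hcomm (Or.inr ⟨hkx, hky⟩)

end perminv

section assembly
variable {A : Type*} [Ring A] [Algebra ℝ A] {d : ℕ}

lemma sorted_case (hbar κ : ℝ) (α : Fin d → ℤ → A)
    (hcomm : ∀ (i j : Fin d) (m n : ℤ),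
      α i m * α j n - α j n * α i m =
        (hbar * (m : ℝ) * κ ^ m.natAbs *
          (if m + n = 0 then (1 : ℝ) else 0) * (if i = j then (1 : ℝ) else 0)) • (1 : A))
    (J : Fin 4 → Fin d) (M : Fin 4 → ℤ) (hM : Monotone M) :
    (1/24 : ℝ) • (∑ π : Equiv.Perm (Fin 4), (List.ofFn fun k => α (J (π k)) (M (π k))).prod) =
      normalQuartic α J M
      + (6/24 : ℝ) • (∑ π : Equiv.Perm (Fin 4),
          contraction hbar κ (J (π 0)) (J (π 1)) (M (π 0)) (M (π 1)) •
            normalPair α (J (π 2)) (J (π 3)) (M (π 2)) (M (π 3)))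
      + (3/24 : ℝ) • (∑ π : Equiv.Perm (Fin 4),
          (contraction hbar κ (J (π 0)) (J (π 1)) (M (π 0)) (M (π 1)) *
           contraction hbar κ (J (π 2)) (J (π 3)) (M (π 2)) (M (π 3))) • (1 : A)) := by
  have h := core (fun k => α (J k) (M k)) (Ksc hbar κ J M)
    (fun k l => contraction hbar κ (J k) (J l) (M k) (M l))
    (fun k l => normalPair α (J k) (J l) (M k) (M l))
    (fun k l _ => hC_of hbar κ α hcomm k l)
    (fun k l => contraction_eq_of_monotone hbar κ J M hM k l)
    (fun k l => normalPair_eq_of_monotone hbar κ α hcomm hM k l)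
  rw [normalQuartic_sorted α hM]
  exact h

end assembly
/-- Wick's theorem for symmetrization and normal order, part (ii): given oscillator
modes with `[α^i_m, α^j_n] = ħ·m·κ^{|m|}·δ_{m+n,0}·δ^{ij}·1`, the 4-symmetrizer
`(1/24){α^{i₁}_{n₁}, α^{i₂}_{n₂}, α^{i₃}_{n₃}, α^{i₄}_{n₄}}` equals the normal-ordered
quartic product, plus the 6 single-contraction terms, plus the 3 double-contraction
terms (each packaged as a sum over all permutations of `Fin 4` with the appropriate
combinatorial prefactor). -/
theorem wick_four_symmetrizer_normal_order {A : Type*} [Ring A] [Algebra ℝ A]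
    {d : ℕ} (hbar κ : ℝ) (α : Fin d → ℤ → A)
    (hcomm : ∀ (i j : Fin d) (m n : ℤ),
      α i m * α j n - α j n * α i m =
        (hbar * (m : ℝ) * κ ^ m.natAbs *
          (if m + n = 0 then (1 : ℝ) else 0) * (if i = j then (1 : ℝ) else 0)) • (1 : A))
    (I : Fin 4 → Fin d) (N : Fin 4 → ℤ) :
    (1/24 : ℝ) • (∑ π : Equiv.Perm (Fin 4), (List.ofFn fun k => α (I (π k)) (N (π k))).prod) =
      normalQuartic α I N
      + (6/24 : ℝ) • (∑ π : Equiv.Perm (Fin 4),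
          contraction hbar κ (I (π 0)) (I (π 1)) (N (π 0)) (N (π 1)) •
            normalPair α (I (π 2)) (I (π 3)) (N (π 2)) (N (π 3)))
      + (3/24 : ℝ) • (∑ π : Equiv.Perm (Fin 4),
          (contraction hbar κ (I (π 0)) (I (π 1)) (N (π 0)) (N (π 1)) *
           contraction hbar κ (I (π 2)) (I (π 3)) (N (π 2)) (N (π 3))) • (1 : A)) := by
  set σ : Equiv.Perm (Fin 4) := Tuple.sort N with hσ
  have hM : Monotone (N ∘ σ) := Tuple.monotone_sort N
  have base := sorted_case hbar κ α hcomm (I ∘ σ) (N ∘ σ) hM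
  have T1 : (∑ π : Equiv.Perm (Fin 4),
        (List.ofFn fun k => α ((I ∘ σ) (π k)) ((N ∘ σ) (π k))).prod)
      = ∑ π : Equiv.Perm (Fin 4), (List.ofFn fun k => α (I (π k)) (N (π k))).prod :=
    Fintype.sum_bijective (σ * ·) (Group.mulLeft_bijective σ) _ _ (fun π => rfl)
  have T2 : (∑ π : Equiv.Perm (Fin 4),
        contraction hbar κ ((I ∘ σ) (π 0)) ((I ∘ σ) (π 1)) ((N ∘ σ) (π 0)) ((N ∘ σ) (π 1)) •
          normalPair α ((I ∘ σ) (π 2)) ((I ∘ σ) (π 3)) ((N ∘ σ) (π 2)) ((N ∘ σ) (π 3)))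
      = ∑ π : Equiv.Perm (Fin 4),
          contraction hbar κ (I (π 0)) (I (π 1)) (N (π 0)) (N (π 1)) •
            normalPair α (I (π 2)) (I (π 3)) (N (π 2)) (N (π 3)) :=
    Fintype.sum_bijective (σ * ·) (Group.mulLeft_bijective σ) _ _ (fun π => rfl)
  have T3 : (∑ π : Equiv.Perm (Fin 4),
        (contraction hbar κ ((I ∘ σ) (π 0)) ((I ∘ σ) (π 1)) ((N ∘ σ) (π 0)) ((N ∘ σ) (π 1)) *
         contraction hbar κ ((I ∘ σ) (π 2)) ((I ∘ σ) (π 3)) ((N ∘ σ) (π 2)) ((N ∘ σ) (π 3)))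
          • (1 : A))
      = ∑ π : Equiv.Perm (Fin 4),
          (contraction hbar κ (I (π 0)) (I (π 1)) (N (π 0)) (N (π 1)) *
           contraction hbar κ (I (π 2)) (I (π 3)) (N (π 2)) (N (π 3))) • (1 : A) :=
    Fintype.sum_bijective (σ * ·) (Group.mulLeft_bijective σ) _ _ (fun π => rfl)
  rw [T1, T2, T3, normalQuartic_perm hbar κ α hcomm I N σ] at base
  exact base
end

section
/- For every real number κ with |κ| < 1 and every integer m ∈ ℤ, the family (k ↦ k·|m−k|·κ^{|k|+|m−k|}) indexed by k ∈ ℤ is summable and its sum A_m := Σ_{k∈ℤ} k·|m−k|·κ^{|k|+|m−k|} equals (m(m²−1)/6)·κ^{|m|}. In particular, the κ-power series A_m is a monomial in κ of degree |m|. -/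
lemma sum_id_real (n : ℕ) : ∑ j ∈ Finset.range (n+1), (j:ℝ) = n*(n+1)/2 := by
  induction n with
  | zero => simp
  | succ n ih => rw [Finset.sum_range_succ, ih]; push_cast; ring

lemma sum_sq_real (n : ℕ) : ∑ j ∈ Finset.range (n+1), (j:ℝ)^2 = n*(n+1)*(2*n+1)/6 := by
  induction n with
  | zero => simp
  | succ n ih => rw [Finset.sum_range_succ, ih]; push_cast; ring

lemma sum_prod_real (n : ℕ) :
    ∑ j ∈ Finset.range (n+1), 2*(j:ℝ)*((n:ℝ)-(j:ℝ)) = (n:ℝ)*((n:ℝ)^2-1)/3 := by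
  have h : ∀ j ∈ Finset.range (n+1), 2*(j:ℝ)*((n:ℝ)-(j:ℝ))
      = 2*(n:ℝ)*(j:ℝ) - 2*(j:ℝ)^2 := fun j _ => by ring
  rw [Finset.sum_congr rfl h, Finset.sum_sub_distrib, ← Finset.mul_sum, sum_id_real,
    ← Finset.mul_sum, sum_sq_real]
  ring

lemma natAbs_cast_nonpos_s7 {j : ℤ} (hj : j ≤ 0) : ((j.natAbs : ℝ)) = -(j:ℝ) := by
  rw [Nat.cast_natAbs, abs_of_nonpos hj, Int.cast_neg]

lemma natAbs_cast_nonneg_s7 {j : ℤ} (hj : 0 ≤ j) : ((j.natAbs : ℝ)) = (j:ℝ) := by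
  rw [Nat.cast_natAbs, abs_of_nonneg hj]

lemma anomaly_tsum_nat (κ : ℝ) (hκ : |κ| < 1) (n : ℕ)
    (hsum : Summable (fun k : ℤ =>
      (k : ℝ) * (((n:ℤ) - k).natAbs : ℝ) * κ ^ (k.natAbs + ((n:ℤ) - k).natAbs))) :
    ∑' k : ℤ, (k : ℝ) * (((n:ℤ) - k).natAbs : ℝ) * κ ^ (k.natAbs + ((n:ℤ) - k).natAbs)
      = (n:ℝ) * ((n:ℝ)^2 - 1) / 6 * κ ^ n := by
  set m : ℤ := (n : ℤ) with hm
  set f : ℤ → ℝ := fun k => (k : ℝ) * ((m - k).natAbs : ℝ) * κ ^ (k.natAbs + (m - k).natAbs)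
    with hf
  -- the reflected family
  have h2 : Summable (fun k : ℤ => f (m - k)) := by
    have := (Equiv.subLeft m).summable_iff.mpr (hsum : Summable f)
    simpa [Function.comp_def] using this
  have h1 : ∑' k, f (m - k) = ∑' k, f k := by
    have := (Equiv.subLeft m).tsum_eq f
    simpa using this
  -- the symmetrized family is finitely supported
  set s : Finset ℤ := (Finset.range (n+1)).map ⟨Nat.cast, Nat.cast_injective⟩ with hs
  have hmem : ∀ k : ℤ, k ∈ s ↔ 0 ≤ k ∧ k ≤ m := by
    intro k
    simp only [hs, Finset.mem_map, Finset.mem_range, Function.Embedding.coeFn_mk]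
    constructor
    · rintro ⟨j, hj, rfl⟩; omega
    · rintro ⟨h0, h1⟩
      exact ⟨k.toNat, by omega, by omega⟩
  have hvan : ∀ k ∉ s, f k + f (m - k) = 0 := by
    intro k hk
    rw [hmem] at hk
    simp only [hf, sub_sub_cancel]
    rw [add_comm ((m-k).natAbs) (k.natAbs)]
    rcases lt_or_ge k 0 with h | h
    · rw [natAbs_cast_nonpos_s7 h.le, natAbs_cast_nonneg_s7 (by omega : (0:ℤ) ≤ m - k)]
      push_cast
      ring
    · have h2 : m < k := by omega
      rw [natAbs_cast_nonneg_s7 (by omega : (0:ℤ) ≤ k),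
        natAbs_cast_nonpos_s7 (by omega : m - k ≤ 0)]
      push_cast
      ring
  have hval : ∀ k ∈ s, f k + f (m - k) = 2*(k:ℝ)*((n:ℝ)-(k:ℝ)) * κ ^ n := by
    intro k hk
    rw [hmem] at hk
    have hexp : k.natAbs + (m - k).natAbs = n := by omega
    simp only [hf, sub_sub_cancel]
    rw [add_comm ((m-k).natAbs) (k.natAbs), hexp,
      natAbs_cast_nonneg_s7 (by omega : (0:ℤ) ≤ k),
      natAbs_cast_nonneg_s7 (by omega : (0:ℤ) ≤ m - k)]
    push_cast [hm]
    ring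
  have hfin : ∑' k, (f k + f (m - k)) = ∑ k ∈ s, (f k + f (m - k)) := tsum_eq_sum hvan
  have hsumval : ∑ k ∈ s, (f k + f (m - k)) = (n:ℝ) * ((n:ℝ)^2 - 1) / 3 * κ ^ n := by
    rw [Finset.sum_congr rfl hval, hs, Finset.sum_map]
    simp only [Function.Embedding.coeFn_mk, Int.cast_natCast]
    rw [← Finset.sum_mul]
    have : ∑ j ∈ Finset.range (n+1), 2*(j:ℝ)*((n:ℝ)-(j:ℝ)) = (n:ℝ)*((n:ℝ)^2-1)/3 := by
      have h : ∀ j ∈ Finset.range (n+1), 2*(j:ℝ)*((n:ℝ)-(j:ℝ))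
          = 2*(n:ℝ)*(j:ℝ) - 2*(j:ℝ)^2 := fun j _ => by ring
      rw [Finset.sum_congr rfl h, Finset.sum_sub_distrib, ← Finset.mul_sum, sum_id_real,
        ← Finset.mul_sum, sum_sq_real]
      ring
    rw [this]
  have hadd : ∑' k, (f k + f (m - k)) = ∑' k, f k + ∑' k, f (m - k) := Summable.tsum_add hsum h2
  rw [hadd, h1, hsumval] at hfin
  linarith [hfin]


lemma anomaly_summable (κ : ℝ) (hκ : |κ| < 1) (m : ℤ) :
    Summable (fun k : ℤ => (k : ℝ) * ((m - k).natAbs : ℝ) * κ ^ (k.natAbs + (m - k).natAbs)) := by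
  have h0 : (0:ℝ) ≤ |κ| := abs_nonneg κ
  have hnat : Summable (fun n : ℕ => ((n:ℝ) * ((n:ℝ) + m.natAbs)) * |κ| ^ n) := by
    have h2 : Summable (fun n : ℕ => (n:ℝ) ^ 2 * |κ| ^ n) := by
      have := summable_pow_mul_geometric_of_norm_lt_one (R := ℝ) 2 (r := |κ|) (by
        simpa using hκ)
      simpa using this
    have h1 : Summable (fun n : ℕ => (m.natAbs : ℝ) * ((n:ℝ) ^ 1 * |κ| ^ n)) := by
      exact (summable_pow_mul_geometric_of_norm_lt_one (R := ℝ) 1 (r := |κ|) (by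
        simpa using hκ)).mul_left _
    have := h2.add h1
    refine this.congr fun n => ?_
    ring
  have hg : Summable (fun k : ℤ => ((k.natAbs:ℝ) * ((k.natAbs:ℝ) + m.natAbs)) * |κ| ^ k.natAbs) := by
    refine Summable.of_nat_of_neg ?_ ?_
    · simpa using hnat
    · refine hnat.congr fun n => ?_
      simp
  refine Summable.of_norm ?_
  refine Summable.of_nonneg_of_le (fun k => norm_nonneg _) (fun k => ?_) hg
  have hb1 : ((m - k).natAbs : ℝ) ≤ (k.natAbs : ℝ) + m.natAbs := by
    have : (m - k).natAbs ≤ k.natAbs + m.natAbs := by omega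
    exact_mod_cast this
  have hb2 : |κ| ^ (k.natAbs + (m - k).natAbs) ≤ |κ| ^ k.natAbs :=
    pow_le_pow_of_le_one h0 hκ.le (Nat.le_add_right _ _)
  calc ‖(k : ℝ) * ((m - k).natAbs : ℝ) * κ ^ (k.natAbs + (m - k).natAbs)‖
      = (k.natAbs : ℝ) * ((m - k).natAbs : ℝ) * |κ| ^ (k.natAbs + (m - k).natAbs) := by
        rw [norm_mul, norm_mul, norm_pow, Real.norm_eq_abs, Real.norm_eq_abs,
          Real.norm_eq_abs, abs_of_nonneg (by positivity : (0:ℝ) ≤ ((m-k).natAbs:ℝ))]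
        congr 1
        rw [← Int.cast_abs, Int.abs_eq_natAbs, Int.cast_natCast]
    _ ≤ (k.natAbs : ℝ) * ((k.natAbs:ℝ) + m.natAbs) * |κ| ^ k.natAbs := by
        gcongr <;> positivity

/-- For `|κ| < 1` and any `m ∈ ℤ`, the anomaly family `k ↦ k·|m−k|·κ^{|k|+|m−k|}`
over `k ∈ ℤ` is summable, and its sum `A_m` equals the monomial
`(m(m²−1)/6)·κ^{|m|}`. -/
theorem virasoro_anomaly_sum (κ : ℝ) (hκ : |κ| < 1) (m : ℤ) :
    Summable (fun k : ℤ => (k : ℝ) * ((m - k).natAbs : ℝ) * κ ^ (k.natAbs + (m - k).natAbs)) ∧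
      ∑' k : ℤ, (k : ℝ) * ((m - k).natAbs : ℝ) * κ ^ (k.natAbs + (m - k).natAbs) =
        (m : ℝ) * ((m : ℝ) ^ 2 - 1) / 6 * κ ^ m.natAbs := by
  have hsum := anomaly_summable κ hκ m
  refine ⟨hsum, ?_⟩
  rcases le_or_gt 0 m with h | h
  · obtain ⟨n, rfl⟩ := Int.eq_ofNat_of_zero_le h
    rw [anomaly_tsum_nat κ hκ n hsum]
    simp
  · obtain ⟨n, rfl⟩ : ∃ n : ℕ, m = -(n:ℤ) := ⟨m.natAbs, by omega⟩
    have hpos := anomaly_summable κ hκ (n:ℤ)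
    set f : ℤ → ℝ := fun k => (k : ℝ) * (((-(n:ℤ)) - k).natAbs : ℝ)
      * κ ^ (k.natAbs + ((-(n:ℤ)) - k).natAbs) with hf
    have key : ∀ k : ℤ, f (-k)
        = -((k:ℝ) * (((n:ℤ)-k).natAbs:ℝ) * κ ^ (k.natAbs + ((n:ℤ)-k).natAbs)) := by
      intro k
      have e1 : (-(n:ℤ)) - (-k) = -((n:ℤ) - k) := by ring
      simp only [hf, e1, Int.natAbs_neg, Int.cast_neg]
      ring
    have h1 : ∑' k, f k = ∑' k, f (-k) := by
      have := (Equiv.neg ℤ).tsum_eq f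
      simpa using this.symm
    rw [h1, tsum_congr key, tsum_neg, anomaly_tsum_nat κ hκ n hpos]
    have hn : ((-(n:ℤ)).natAbs) = n := by omega
    rw [hn]
    push_cast
    ring
end

section
/- For every real number κ with |κ| < 1 and every integer m ∈ ℤ, the family (k ↦ sgn(k)·κ^{|k|+|m−k|}) indexed by k ∈ ℤ is summable and its sum B_m := Σ_{k∈ℤ} sgn(k)·κ^{|k|+|m−k|} equals m·κ^{|m|}. In particular, the κ-power series B_m is a monomial in κ of degree |m|. -/
private lemma sign_summable (κ : ℝ) (hκ : |κ| < 1) (m : ℤ) :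
    Summable (fun k : ℤ => (k.sign : ℝ) * κ ^ (k.natAbs + (m - k).natAbs)) := by
  have hb : Summable (fun n : ℕ => |κ| ^ n) := summable_geometric_of_lt_one (abs_nonneg κ) hκ
  have key : ∀ g : ℕ → ℤ, (∀ n, n ≤ (g n).natAbs) →
      Summable (fun n : ℕ => ((g n).sign : ℝ) * κ ^ ((g n).natAbs + (m - g n).natAbs)) := by
    intro g hg
    apply Summable.of_norm_bounded hb
    intro n
    have h1 : |((g n).sign : ℝ)| ≤ 1 := by
      rcases lt_trichotomy (g n) 0 with h | h | h <;>
        simp [Int.sign_eq_neg_one_of_neg, Int.sign_eq_one_of_pos, h]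
    calc ‖((g n).sign : ℝ) * κ ^ ((g n).natAbs + (m - g n).natAbs)‖
        = |((g n).sign : ℝ)| * |κ| ^ ((g n).natAbs + (m - g n).natAbs) := by
          rw [norm_mul, norm_pow]; rfl
      _ ≤ 1 * |κ| ^ ((g n).natAbs + (m - g n).natAbs) :=
          mul_le_mul_of_nonneg_right h1 (by positivity)
      _ = |κ| ^ ((g n).natAbs + (m - g n).natAbs) := one_mul _
      _ ≤ |κ| ^ n :=
          pow_le_pow_of_le_one (abs_nonneg κ) hκ.le (le_trans (hg n) (Nat.le_add_right _ _))
  exact Summable.of_nat_of_neg_add_one (key (fun n => (n : ℤ)) (by simp))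
    (key (fun n => -((n : ℤ) + 1)) (fun n => by simp; omega))

private lemma signsum_nat : ∀ n : ℕ, ∑ k ∈ Finset.Icc (0:ℤ) (n:ℤ), k.sign = n := by
  intro n
  induction n with
  | zero => simp
  | succ n ih =>
    have hins : Finset.Icc (0:ℤ) ((n:ℤ)+1) = insert ((n:ℤ)+1) (Finset.Icc (0:ℤ) (n:ℤ)) := by
      ext x; simp only [Finset.mem_Icc, Finset.mem_insert]; omega
    have hnm : ((n:ℤ)+1) ∉ Finset.Icc (0:ℤ) (n:ℤ) := by simp
    rw [show ((n+1 : ℕ):ℤ) = (n:ℤ) + 1 by push_cast; ring, hins, Finset.sum_insert hnm, ih,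
      Int.sign_eq_one_of_pos (by positivity)]
    ring

private lemma signsum (m : ℤ) (hm : 0 ≤ m) :
    ∑ k ∈ Finset.Icc (0:ℤ) m, (k.sign + (m - k).sign) = 2 * m := by
  rw [Finset.sum_add_distrib]
  have h2 : ∑ k ∈ Finset.Icc (0:ℤ) m, (m - k).sign = ∑ k ∈ Finset.Icc (0:ℤ) m, k.sign := by
    apply Finset.sum_equiv (Equiv.subLeft m)
    · intro i; simp only [Finset.mem_Icc, Equiv.subLeft_apply]; omega
    · intro i _; simp
  obtain ⟨n, rfl⟩ := Int.eq_ofNat_of_zero_le hm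
  rw [h2, signsum_nat]; ring

set_option maxHeartbeats 1000000 in
private lemma tsum_nonneg_case (κ : ℝ) (hκ : |κ| < 1) (m : ℤ) (hm : 0 ≤ m) :
    ∑' k : ℤ, (k.sign : ℝ) * κ ^ (k.natAbs + (m - k).natAbs) = (m : ℝ) * κ ^ m.natAbs := by
  set f : ℤ → ℝ := fun k => (k.sign : ℝ) * κ ^ (k.natAbs + (m - k).natAbs) with hfdef
  have hf : Summable f := sign_summable κ hκ m
  have hfe : Summable (fun k => f (m - k)) := ((Equiv.subLeft m).summable_iff).mpr hf
  have hkey : ∀ k : ℤ, f k + f (m - k)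
      = (((k.sign + (m-k).sign : ℤ)):ℝ) * κ ^ (k.natAbs + (m - k).natAbs) := by
    intro k
    have h1 : m - (m - k) = k := by ring
    simp only [hfdef, h1]
    rw [Nat.add_comm ((m-k).natAbs) (k.natAbs)]
    push_cast
    ring
  -- the paired sum has finite support
  have hzero : ∀ k : ℤ, k ∉ Finset.Icc (0:ℤ) m → f k + f (m - k) = 0 := by
    intro k hk
    rw [hkey k]
    have : k.sign + (m - k).sign = 0 := by
      simp only [Finset.mem_Icc, not_and_or, not_le] at hk
      rcases hk with h | h
      · rw [Int.sign_eq_neg_one_of_neg h, Int.sign_eq_one_of_pos (by omega)]; ring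
      · rw [Int.sign_eq_one_of_pos (by omega), Int.sign_eq_neg_one_of_neg (by omega)]; ring
    rw [this]; simp
  have hts : ∑' k : ℤ, (f k + f (m - k)) = ∑ k ∈ Finset.Icc (0:ℤ) m, (f k + f (m - k)) :=
    tsum_eq_sum hzero
  have hfin : ∑ k ∈ Finset.Icc (0:ℤ) m, (f k + f (m - k)) = 2 * (m : ℝ) * κ ^ m.natAbs := by
    have : ∀ k ∈ Finset.Icc (0:ℤ) m, f k + f (m - k)
        = (((k.sign + (m-k).sign : ℤ)):ℝ) * κ ^ m.natAbs := by
      intro k hk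
      simp only [Finset.mem_Icc] at hk
      rw [hkey k, show k.natAbs + (m - k).natAbs = m.natAbs by omega]
    rw [Finset.sum_congr rfl this, ← Finset.sum_mul, ← Int.cast_sum, signsum m hm]
    push_cast; ring
  have h2 : ∑' k : ℤ, (f k + f (m - k)) = 2 * ∑' k, f k := by
    rw [Summable.tsum_add hf hfe]
    have he : ∑' k : ℤ, f (m - k) = ∑' k, f k := (Equiv.subLeft m).tsum_eq f
    rw [he]; ring
  have := h2.symm.trans (hts.trans hfin)
  linarith

/-- For `|κ| < 1` and any `m ∈ ℤ`, the family `k ↦ sgn(k)·κ^{|k|+|m−k|}` over `k ∈ ℤ`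
is summable, and its sum `B_m` equals the monomial `m·κ^{|m|}`. -/
theorem sign_sum_monomial (κ : ℝ) (hκ : |κ| < 1) (m : ℤ) :
    Summable (fun k : ℤ => (k.sign : ℝ) * κ ^ (k.natAbs + (m - k).natAbs)) ∧
      ∑' k : ℤ, (k.sign : ℝ) * κ ^ (k.natAbs + (m - k).natAbs) = (m : ℝ) * κ ^ m.natAbs := by
  refine ⟨sign_summable κ hκ m, ?_⟩
  rcases le_or_gt 0 m with hm | hm
  · exact tsum_nonneg_case κ hκ m hm
  · -- reduce to the nonneg case via k ↦ -k
    have hpt : ∀ k : ℤ, ((-k).sign : ℝ) * κ ^ ((-k).natAbs + (m - -k).natAbs)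
        = -((k.sign : ℝ) * κ ^ (k.natAbs + (-m - k).natAbs)) := by
      intro k
      rw [Int.sign_neg, Int.natAbs_neg, show (m - -k).natAbs = (-m - k).natAbs by omega]
      push_cast; ring
    have he : ∑' k : ℤ, ((k:ℤ).sign : ℝ) * κ ^ (k.natAbs + (m - k).natAbs)
        = ∑' k : ℤ, ((-k).sign : ℝ) * κ ^ ((-k).natAbs + (m - -k).natAbs) :=
      ((Equiv.neg ℤ).tsum_eq fun k => ((k:ℤ).sign : ℝ) * κ ^ (k.natAbs + (m - k).natAbs)).symm
    rw [he]
    calc ∑' k : ℤ, ((-k).sign : ℝ) * κ ^ ((-k).natAbs + (m - -k).natAbs)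
        = ∑' k : ℤ, -(((k:ℤ).sign : ℝ) * κ ^ (k.natAbs + (-m - k).natAbs)) := by
          exact tsum_congr hpt
      _ = -∑' k : ℤ, ((k:ℤ).sign : ℝ) * κ ^ (k.natAbs + (-m - k).natAbs) := tsum_neg
      _ = -(((-m : ℤ) : ℝ) * κ ^ (-m).natAbs) := by
          rw [tsum_nonneg_case κ hκ (-m) (by omega)]
      _ = (m : ℝ) * κ ^ m.natAbs := by
          rw [Int.natAbs_neg]; push_cast; ring
end
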